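/- Let C be a separable Frobenius monoid in a monoidal category V, let X be a right C-module with action ρ : X ⊗ C ⟶ X and let Y be a left C-module with action λ : C ⊗ Y ⟶ Y. Consider the parallel pair g₁ := (ρ ⊗ 1_Y) : X ⊗ C ⊗ Y ⟶ X ⊗ Y and g₂ := (1_X ⊗ λ) : X ⊗ C ⊗ Y ⟶ X ⊗ Y (associators suppressed), and define b := (ρ ⊗ λ) ∘ (1_X ⊗ (δ ∘ η) ⊗ 1_Y) : X ⊗ Y ⟶ X ⊗ Y (unitors and associators suppressed). Then: (i) b is idempotent and b ∘ g₁ = b ∘ g₂; (ii) for every splitting of b (morphisms p : X ⊗ Y ⟶ W, i : W ⟶ X ⊗ Y with i ∘ p = b and p ∘ i = 1_W), the morphism p : X ⊗ Y ⟶ W is a coequalizer of the pair (g₁, g₂). Thus the tensor product X ⊗_C Y over C is the splitting (X ⊗ Y, b) of the idempotent b. -/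

import Mathlib

open CategoryTheory MonoidalCategory CategoryTheory.Limits

/-- A separable Frobenius monoid in a monoidal category `V`. -/
structure SeparableFrobenius (V : Type*) [Category V] [MonoidalCategory V] where
  C : V
  mul : C ⊗ C ⟶ C
  one : 𝟙_ V ⟶ C
  comul : C ⟶ C ⊗ C
  counit : C ⟶ 𝟙_ V
  mul_assoc : (mul ▷ C) ≫ mul = (α_ C C C).hom ≫ (C ◁ mul) ≫ mul
  one_mul : (one ▷ C) ≫ mul = (λ_ C).hom
  mul_one : (C ◁ one) ≫ mul = (ρ_ C).hom
  comul_coassoc : comul ≫ (C ◁ comul) = comul ≫ (comul ▷ C) ≫ (α_ C C C).hom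
  counit_comul : comul ≫ (counit ▷ C) = (λ_ C).inv
  comul_counit : comul ≫ (C ◁ counit) = (ρ_ C).inv
  frobenius₁ : (comul ▷ C) ≫ (α_ C C C).hom ≫ (C ◁ mul) = mul ≫ comul
  frobenius₂ : (C ◁ comul) ≫ (α_ C C C).inv ≫ (mul ▷ C) = mul ≫ comul
  separable : comul ≫ mul = 𝟙 C

namespace SepFrobAux

variable {V : Type*} [Category V] [MonoidalCategory V] (F : SeparableFrobenius V)

/-- `(1 ⊗ δη) ≫ α⁻¹ ≫ (μ ⊗ 1) = δ` (with unitor). -/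
lemma L1 : (ρ_ F.C).inv ≫ (F.C ◁ (F.one ≫ F.comul)) ≫ (α_ F.C F.C F.C).inv ≫ (F.mul ▷ F.C)
    = F.comul := by
  rw [MonoidalCategory.whiskerLeft_comp]
  slice_lhs 3 5 => rw [F.frobenius₂]
  slice_lhs 2 3 => rw [F.mul_one]
  simp

/-- `(δη ⊗ 1) ≫ α ≫ (1 ⊗ μ) = δ` (with unitor). -/
lemma L2 : (λ_ F.C).inv ≫ ((F.one ≫ F.comul) ▷ F.C) ≫ (α_ F.C F.C F.C).hom ≫ (F.C ◁ F.mul)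
    = F.comul := by
  rw [comp_whiskerRight]
  slice_lhs 3 5 => rw [F.frobenius₁]
  slice_lhs 2 3 => rw [F.one_mul]
  simp

variable (X : V) (ract : X ⊗ F.C ⟶ X) (Y : V) (lact : F.C ⊗ Y ⟶ Y)

/-- The morphism `b`. -/
noncomputable def bmor : X ⊗ Y ⟶ X ⊗ Y :=
  (X ◁ (λ_ Y).inv) ≫ (X ◁ ((F.one ≫ F.comul) ▷ Y)) ≫ (X ◁ (α_ F.C F.C Y).hom) ≫
    (α_ X F.C (F.C ⊗ Y)).inv ≫ (ract ⊗ₘ lact)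

/-- The auxiliary morphism `e : x ⊗ y ↦ (x ⊗ c₁) ⊗ λ(c₂, y)` where `c₁ ⊗ c₂ = δη`. -/
noncomputable def emor : X ⊗ Y ⟶ (X ⊗ F.C) ⊗ Y :=
  (X ◁ (λ_ Y).inv) ≫ (X ◁ ((F.one ≫ F.comul) ▷ Y)) ≫ (X ◁ (α_ F.C F.C Y).hom) ≫
    (X ◁ (F.C ◁ lact)) ≫ (α_ X F.C Y).inv

/-- The intermediate morphism `t : (x ⊗ c) ⊗ y ↦ ρ(x, δ(c)₁) ⊗ λ(δ(c)₂, y)`. -/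
noncomputable def tmor : (X ⊗ F.C) ⊗ Y ⟶ X ⊗ Y :=
  ((X ◁ F.comul) ▷ Y) ≫ ((α_ X F.C F.C).inv ▷ Y) ≫ (α_ (X ⊗ F.C) F.C Y).hom ≫
    (ract ⊗ₘ lact)

lemma claimA : emor F X Y lact ≫ (ract ▷ Y) = bmor F X ract Y lact := by
  unfold emor bmor
  rw [tensorHom_def' ract lact]
  slice_rhs 4 5 => rw [← associator_inv_naturality_right]
  simp

lemma claimB (hYassoc : (α_ F.C F.C Y).hom ≫ (F.C ◁ lact) ≫ lact = (F.mul ▷ Y) ≫ lact)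
    (hYunit : (λ_ Y).inv ≫ (F.one ▷ Y) ≫ lact = 𝟙 Y) :
    emor F X Y lact ≫ (α_ X F.C Y).hom ≫ (X ◁ lact) = 𝟙 (X ⊗ Y) := by
  unfold emor
  slice_lhs 5 6 => rw [Iso.inv_hom_id]
  have inner : (λ_ Y).inv ≫ ((F.one ≫ F.comul) ▷ Y) ≫ (α_ F.C F.C Y).hom ≫ (F.C ◁ lact) ≫ lact
      = 𝟙 Y := by
    rw [hYassoc]
    slice_lhs 2 3 => rw [← comp_whiskerRight, Category.assoc, F.separable, Category.comp_id]
    exact hYunit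
  calc (X ◁ (λ_ Y).inv) ≫ (X ◁ ((F.one ≫ F.comul) ▷ Y)) ≫ (X ◁ (α_ F.C F.C Y).hom) ≫
        (X ◁ (F.C ◁ lact)) ≫ 𝟙 _ ≫ (X ◁ lact)
      = X ◁ ((λ_ Y).inv ≫ ((F.one ≫ F.comul) ▷ Y) ≫ (α_ F.C F.C Y).hom ≫ (F.C ◁ lact) ≫ lact) := by
        simp [MonoidalCategory.whiskerLeft_comp]
    _ = 𝟙 (X ⊗ Y) := by rw [inner, MonoidalCategory.whiskerLeft_id]

lemma claim2a
    (hXassoc : (α_ X F.C F.C).inv ≫ (ract ▷ F.C) ≫ ract = (X ◁ F.mul) ≫ ract) :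
    (ract ▷ Y) ≫ bmor F X ract Y lact = tmor F X ract Y lact := by
  have hX' : (ract ▷ F.C) ≫ ract = (α_ X F.C F.C).hom ≫ (X ◁ F.mul) ≫ ract := by
    rw [← hXassoc]; simp
  unfold bmor tmor
  rw [tensorHom_def ract lact]
  slice_lhs 1 2 => rw [← whisker_exchange]
  slice_lhs 2 3 => rw [← whisker_exchange]
  slice_lhs 3 4 => rw [← whisker_exchange]
  slice_lhs 4 5 => rw [associator_inv_naturality_left]
  slice_lhs 5 6 => rw [← comp_whiskerRight, hX', comp_whiskerRight, comp_whiskerRight]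
  have hcore : ((X ⊗ F.C) ◁ (λ_ Y).inv) ≫ ((X ⊗ F.C) ◁ ((F.one ≫ F.comul) ▷ Y)) ≫
        ((X ⊗ F.C) ◁ (α_ F.C F.C Y).hom) ≫ (α_ (X ⊗ F.C) F.C (F.C ⊗ Y)).inv ≫
        ((α_ X F.C F.C).hom ▷ (F.C ⊗ Y)) ≫ ((X ◁ F.mul) ▷ (F.C ⊗ Y))
      = ((X ◁ ((ρ_ F.C).inv ≫ (F.C ◁ (F.one ≫ F.comul)) ≫ (α_ F.C F.C F.C).inv ≫
          (F.mul ▷ F.C))) ▷ Y) ≫ ((α_ X F.C F.C).inv ▷ Y) ≫ (α_ (X ⊗ F.C) F.C Y).hom := by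
    monoidal
  slice_lhs 1 6 => rw [hcore]
  rw [L1]
  simp [tensorHom_def ract lact]

lemma claim2b
    (hYassoc : (α_ F.C F.C Y).hom ≫ (F.C ◁ lact) ≫ lact = (F.mul ▷ Y) ≫ lact) :
    ((α_ X F.C Y).hom ≫ (X ◁ lact)) ≫ bmor F X ract Y lact = tmor F X ract Y lact := by
  have hY' : (F.C ◁ lact) ≫ lact = (α_ F.C F.C Y).inv ≫ (F.mul ▷ Y) ≫ lact := by
    rw [← hYassoc]; simp
  unfold bmor tmor
  rw [tensorHom_def' ract lact]
  slice_lhs 6 7 => rw [← associator_inv_naturality_right]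
  have inner2 : lact ≫ (λ_ Y).inv ≫ ((F.one ≫ F.comul) ▷ Y) ≫ (α_ F.C F.C Y).hom ≫
        (F.C ◁ lact)
      = (λ_ (F.C ⊗ Y)).inv ≫ ((F.one ≫ F.comul) ▷ (F.C ⊗ Y)) ≫ (α_ F.C F.C (F.C ⊗ Y)).hom ≫
        (F.C ◁ (α_ F.C F.C Y).inv) ≫ (F.C ◁ (F.mul ▷ Y)) ≫ (F.C ◁ lact) := by
    slice_lhs 1 2 => rw [leftUnitor_inv_naturality]
    slice_lhs 2 3 => rw [whisker_exchange]
    slice_lhs 3 4 => rw [associator_naturality_right]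
    slice_lhs 4 5 => rw [← MonoidalCategory.whiskerLeft_comp, hY']
    simp [MonoidalCategory.whiskerLeft_comp]
  simp only [Category.assoc]
  calc (α_ X F.C Y).hom ≫ (X ◁ lact) ≫ (X ◁ (λ_ Y).inv) ≫ (X ◁ ((F.one ≫ F.comul) ▷ Y)) ≫
        (X ◁ (α_ F.C F.C Y).hom) ≫ (X ◁ (F.C ◁ lact)) ≫ (α_ X F.C Y).inv ≫ (ract ▷ Y)
      = (α_ X F.C Y).hom ≫ (X ◁ (lact ≫ (λ_ Y).inv ≫ ((F.one ≫ F.comul) ▷ Y) ≫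
          (α_ F.C F.C Y).hom ≫ (F.C ◁ lact))) ≫ (α_ X F.C Y).inv ≫ (ract ▷ Y) := by
        simp [MonoidalCategory.whiskerLeft_comp]
    _ = (α_ X F.C Y).hom ≫ (X ◁ ((λ_ (F.C ⊗ Y)).inv ≫ ((F.one ≫ F.comul) ▷ (F.C ⊗ Y)) ≫
          (α_ F.C F.C (F.C ⊗ Y)).hom ≫ (F.C ◁ (α_ F.C F.C Y).inv) ≫ (F.C ◁ (F.mul ▷ Y)) ≫
          (F.C ◁ lact))) ≫ (α_ X F.C Y).inv ≫ (ract ▷ Y) := by rw [inner2]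
    _ = ((X ◁ ((λ_ F.C).inv ≫ ((F.one ≫ F.comul) ▷ F.C) ≫ (α_ F.C F.C F.C).hom ≫
          (F.C ◁ F.mul))) ▷ Y) ≫ ((α_ X F.C F.C).inv ▷ Y) ≫ (α_ (X ⊗ F.C) F.C Y).hom ≫
          ((X ⊗ F.C) ◁ lact) ≫ (ract ▷ Y) := by monoidal
    _ = ((X ◁ F.comul) ▷ Y) ≫ ((α_ X F.C F.C).inv ▷ Y) ≫ (α_ (X ⊗ F.C) F.C Y).hom ≫
          ((X ⊗ F.C) ◁ lact) ≫ (ract ▷ Y) := by rw [L2]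
    _ = _ := by rw [← tensorHom_def']

end SepFrobAux

theorem tensor_over_C_as_splitting_of_idempotent
    {V : Type*} [Category V] [MonoidalCategory V] (F : SeparableFrobenius V)
    (X : V) (ract : X ⊗ F.C ⟶ X)
    (hXassoc : (α_ X F.C F.C).inv ≫ (ract ▷ F.C) ≫ ract = (X ◁ F.mul) ≫ ract)
    (hXunit : (ρ_ X).inv ≫ (X ◁ F.one) ≫ ract = 𝟙 X)
    (Y : V) (lact : F.C ⊗ Y ⟶ Y)
    (hYassoc : (α_ F.C F.C Y).hom ≫ (F.C ◁ lact) ≫ lact = (F.mul ▷ Y) ≫ lact)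
    (hYunit : (λ_ Y).inv ≫ (F.one ▷ Y) ≫ lact = 𝟙 Y) :
    letI g₁ : (X ⊗ F.C) ⊗ Y ⟶ X ⊗ Y := ract ▷ Y
    letI g₂ : (X ⊗ F.C) ⊗ Y ⟶ X ⊗ Y := (α_ X F.C Y).hom ≫ (X ◁ lact)
    letI b : X ⊗ Y ⟶ X ⊗ Y :=
      (X ◁ (λ_ Y).inv) ≫ (X ◁ ((F.one ≫ F.comul) ▷ Y)) ≫ (X ◁ (α_ F.C F.C Y).hom) ≫
        (α_ X F.C (F.C ⊗ Y)).inv ≫ (ract ⊗ₘ lact)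
    (b ≫ b = b) ∧
    (g₁ ≫ b = g₂ ≫ b) ∧
    ∀ (W : V) (p : X ⊗ Y ⟶ W) (i : W ⟶ X ⊗ Y),
      p ≫ i = b → i ≫ p = 𝟙 W →
      ∀ (w : g₁ ≫ p = g₂ ≫ p), Nonempty (IsColimit (Cofork.ofπ p w)) := by
  have h2 : (ract ▷ Y) ≫ SepFrobAux.bmor F X ract Y lact
      = ((α_ X F.C Y).hom ≫ (X ◁ lact)) ≫ SepFrobAux.bmor F X ract Y lact := by
    rw [SepFrobAux.claim2a F X ract Y lact hXassoc, SepFrobAux.claim2b F X ract Y lact hYassoc]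
  have hbq : ∀ {Z : V} (q : X ⊗ Y ⟶ Z),
      (ract ▷ Y) ≫ q = ((α_ X F.C Y).hom ≫ (X ◁ lact)) ≫ q →
      SepFrobAux.bmor F X ract Y lact ≫ q = q := by
    intro Z q hq
    have hA : SepFrobAux.emor F X Y lact ≫ (ract ▷ Y) = SepFrobAux.bmor F X ract Y lact :=
      SepFrobAux.claimA F X ract Y lact
    have hB : SepFrobAux.emor F X Y lact ≫ ((α_ X F.C Y).hom ≫ (X ◁ lact)) = 𝟙 (X ⊗ Y) := by
      exact SepFrobAux.claimB F X Y lact hYassoc hYunit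
    calc SepFrobAux.bmor F X ract Y lact ≫ q
        = SepFrobAux.emor F X Y lact ≫ (ract ▷ Y) ≫ q := by rw [← hA, Category.assoc]
      _ = SepFrobAux.emor F X Y lact ≫ ((α_ X F.C Y).hom ≫ (X ◁ lact)) ≫ q := by rw [hq]
      _ = q := by rw [← Category.assoc, hB, Category.id_comp]
  refine ⟨hbq _ h2, h2, ?_⟩
  intro W p i hpi hip w
  have hpi' : p ≫ i = SepFrobAux.bmor F X ract Y lact := hpi
  refine ⟨Cofork.IsColimit.mk _ (fun s => i ≫ s.π) (fun s => ?_) (fun s m hm => ?_)⟩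
  · have hcond : (ract ▷ Y) ≫ s.π = ((α_ X F.C Y).hom ≫ (X ◁ lact)) ≫ s.π := s.condition
    calc p ≫ i ≫ s.π = (p ≫ i) ≫ s.π := by rw [Category.assoc]
      _ = SepFrobAux.bmor F X ract Y lact ≫ s.π := by rw [hpi']
      _ = s.π := hbq s.π hcond
  · have hm' : p ≫ m = s.π := hm
    calc m = (i ≫ p) ≫ m := by rw [hip, Category.id_comp]
      _ = i ≫ p ≫ m := by rw [Category.assoc]
      _ = i ≫ s.π := by rw [hm']
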